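/- Let p ∈ (1, ∞), let H be an open affine half-space in ℝ^N with 0 ∈ closure(H), and let v, w ∈ L^p(ℝ^N) be such that the product v·w is Lebesgue integrable on ℝ^N and the product v_H·w_H of their polarizations is Lebesgue integrable on ℝ^N. Then ∫_{ℝ^N} v(x) w(x) dx ≤ ∫_{ℝ^N} v_H(x) w_H(x) dx. -/

import Mathlib

open MeasureTheory
open scoped RealInnerProductSpace ENNReal

noncomputable def reflHyp {N : ℕ} (u : EuclideanSpace ℝ (Fin N)) (c : ℝ)
    (x : EuclideanSpace ℝ (Fin N)) : EuclideanSpace ℝ (Fin N) :=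
  x - (2 * (⟪x, u⟫ - c)) • u

def halfSpace {N : ℕ} (u : EuclideanSpace ℝ (Fin N)) (c : ℝ) :
    Set (EuclideanSpace ℝ (Fin N)) :=
  {x | ⟪x, u⟫ < c}

noncomputable def polSet {N : ℕ} (u : EuclideanSpace ℝ (Fin N)) (c : ℝ)
    (Ω : Set (EuclideanSpace ℝ (Fin N))) : Set (EuclideanSpace ℝ (Fin N)) :=
  ((Ω ∪ reflHyp u c '' Ω) ∩ halfSpace u c) ∪ (Ω ∩ reflHyp u c '' Ω)

noncomputable def polFun {N : ℕ} (u : EuclideanSpace ℝ (Fin N)) (c : ℝ)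
    (f : EuclideanSpace ℝ (Fin N) → ℝ) (x : EuclideanSpace ℝ (Fin N)) : ℝ :=
  if ⟪x, u⟫ < c then max (f x) (f (reflHyp u c x))
  else min (f x) (f (reflHyp u c x))

lemma key_maxmin (a a' b b' : ℝ) :
    a * b + a' * b' ≤ max a a' * max b b' + min a a' * min b b' := by
  rcases le_total a a' with h | h <;> rcases le_total b b' with h' | h' <;>
    simp [max_eq_left, max_eq_right, min_eq_left, min_eq_right, *] <;> nlinarith

lemma inner_reflHyp {N : ℕ} (u : EuclideanSpace ℝ (Fin N)) (hu : ‖u‖ = 1) (c : ℝ)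
    (x : EuclideanSpace ℝ (Fin N)) : ⟪reflHyp u c x, u⟫ = 2 * c - ⟪x, u⟫ := by
  have huu : ⟪u, u⟫ = 1 := by
    rw [real_inner_self_eq_norm_sq, hu]; norm_num
  simp only [reflHyp, inner_sub_left, real_inner_smul_left, huu]
  ring

lemma reflHyp_involutive {N : ℕ} (u : EuclideanSpace ℝ (Fin N)) (hu : ‖u‖ = 1) (c : ℝ)
    (x : EuclideanSpace ℝ (Fin N)) : reflHyp u c (reflHyp u c x) = x := by
  have huu : ⟪u, u⟫ = 1 := by
    rw [real_inner_self_eq_norm_sq, hu]; norm_num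
  simp only [reflHyp, inner_sub_left, real_inner_smul_left, huu]
  module

/-- (Hardy–Littlewood inequality for polarization on `ℝ^N`.) For `p ∈ (1, ∞)`,
a half-space `H` with `0 ∈ closure H`, and `v, w ∈ L^p(ℝ^N)` with `v·w` and `v_H·w_H`
integrable, one has `∫ v w ≤ ∫ v_H w_H`. -/
theorem polFun_hardy_littlewood {N : ℕ} (p : ℝ≥0∞) (hp1 : 1 < p) (hptop : p ≠ ⊤)
    (u : EuclideanSpace ℝ (Fin N)) (hu : ‖u‖ = 1) (c : ℝ)
    (h0 : (0 : EuclideanSpace ℝ (Fin N)) ∈ closure (halfSpace u c))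
    (v w : EuclideanSpace ℝ (Fin N) → ℝ)
    (hv : MemLp v p volume) (hw : MemLp w p volume)
    (hvw : Integrable (fun x => v x * w x) volume)
    (hvwH : Integrable (fun x => polFun u c v x * polFun u c w x) volume) :
    ∫ x, v x * w x ≤ ∫ x, polFun u c v x * polFun u c w x := by
  set σ := reflHyp u c with hσ
  -- σ as a measure preserving map
  have huu : ⟪u, u⟫ = 1 := by rw [real_inner_self_eq_norm_sq, hu]; norm_num
  set L : EuclideanSpace ℝ (Fin N) ≃ₗᵢ[ℝ] EuclideanSpace ℝ (Fin N) :=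
    Submodule.reflection ((ℝ ∙ u)ᗮ) with hL
  have hLapp : ∀ x, L x = x - (2 * ⟪x, u⟫) • u := by
    intro x
    rw [hL, Submodule.reflection_orthogonal_apply, Submodule.reflection_singleton_apply]
    norm_num [hu, real_inner_comm u x, two_smul]
    module
  have hfun : σ = fun x => L x + (2 * c) • u := by
    funext x
    rw [hσ, reflHyp, hLapp]
    module
  have hmp : MeasurePreserving σ (volume : Measure (EuclideanSpace ℝ (Fin N))) volume := by
    rw [hfun]
    exact (measurePreserving_add_right volume ((2 * c) • u)).comp L.measurePreserving
  have emb : MeasurableEmbedding σ := by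
    rw [hfun]
    exact ((L.toHomeomorph.trans
      (Homeomorph.addRight ((2 * c) • u))).toMeasurableEquiv).measurableEmbedding
  have hinv : ∀ x, σ (σ x) = x := reflHyp_involutive u hu c
  have hin : ∀ x, ⟪σ x, u⟫ = 2 * c - ⟪x, u⟫ := inner_reflHyp u hu c
  -- pointwise inequality
  have ptwise : ∀ x, v x * w x + v (σ x) * w (σ x) ≤
      polFun u c v x * polFun u c w x + polFun u c v (σ x) * polFun u c w (σ x) := by
    intro x
    rcases lt_trichotomy (⟪x, u⟫) c with h | h | h
    · have h' : ¬ ⟪σ x, u⟫ < c := by rw [hin]; linarith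
      simp only [polFun, if_pos h, if_neg h', ← hσ, hinv]
      calc v x * w x + v (σ x) * w (σ x)
          ≤ max (v x) (v (σ x)) * max (w x) (w (σ x))
            + min (v x) (v (σ x)) * min (w x) (w (σ x)) := key_maxmin _ _ _ _
        _ = _ := by rw [min_comm (v x), min_comm (w x)]
    · have hx : σ x = x := by rw [hσ, reflHyp, h]; simp
      have h' : ¬ ⟪x, u⟫ < c := by rw [h]; exact lt_irrefl c
      simp only [polFun, if_neg h', ← hσ, hx, min_self]
      exact le_refl _
    · have h' : ¬ ⟪x, u⟫ < c := not_lt.mpr h.le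
      have h'' : ⟪σ x, u⟫ < c := by rw [hin]; linarith
      simp only [polFun, if_neg h', if_pos h'', ← hσ, hinv]
      calc v x * w x + v (σ x) * w (σ x)
          = v (σ x) * w (σ x) + v x * w x := by ring
        _ ≤ max (v (σ x)) (v x) * max (w (σ x)) (w x)
            + min (v (σ x)) (v x) * min (w (σ x)) (w x) := key_maxmin _ _ _ _
        _ = _ := by rw [min_comm (v (σ x)), min_comm (w (σ x)), max_comm (v (σ x)),
            max_comm (w (σ x))]; ring
  have h2 : Integrable (fun x => v (σ x) * w (σ x)) volume :=
    (hmp.integrable_comp_emb emb).mpr hvw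
  have h3 : Integrable (fun x => polFun u c v (σ x) * polFun u c w (σ x)) volume :=
    (hmp.integrable_comp_emb emb).mpr hvwH
  have hint1 : ∫ x, v (σ x) * w (σ x) = ∫ x, v x * w x :=
    hmp.integral_comp emb (fun x => v x * w x)
  have hint2 : ∫ x, polFun u c v (σ x) * polFun u c w (σ x)
      = ∫ x, polFun u c v x * polFun u c w x :=
    hmp.integral_comp emb (fun x => polFun u c v x * polFun u c w x)
  have := integral_mono (hvw.add h2) (hvwH.add h3) ptwise
  simp only [Pi.add_apply] at this
  rw [integral_add hvw h2, integral_add hvwH h3, hint1, hint2] at this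
  linarith
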